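/- For a reversible irreducible Markov chain on a finite state space, there exists a 'hidden vertex' w, i.e., a state w such that H(w,x) ≤ H(x,w) for all states x, where H denotes expected hitting time. -/
import Mathlib


/-- Every reversible irreducible Markov chain on a finite state space has a `hidden vertex`
`w`, i.e. a state such that `H(w,x) ≤ H(x,w)` for all states `x`, where `H` denotes
the expected hitting time (characterized by its one-step recursion). -/
theorem stmt_3 {Ω : Type*} [Fintype Ω] [DecidableEq Ω]
    (P : Matrix Ω Ω ℝ)
    (hPnonneg : ∀ x y, 0 ≤ P x y)
    (hProw : ∀ x, ∑ y, P x y = 1)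
    (hirr : ∀ x y : Ω, ∃ k : ℕ, 0 < (P ^ k) x y)
    (π : Ω → ℝ) (hπpos : ∀ x, 0 < π x) (hπsum : ∑ x, π x = 1)
    (hrev : ∀ x y, π x * P x y = π y * P y x)
    (H : Ω → Ω → ℝ)
    (hH0 : ∀ x, H x x = 0)
    (hHrec : ∀ x y, x ≠ y → H x y = 1 + ∑ z, P x z * H z y) :
    ∃ w : Ω, ∀ x : Ω, H w x ≤ H x w := by
  classical
  have hne : Nonempty Ω := by
    by_contra h
    rw [not_nonempty_iff] at h
    simp [Finset.univ_eq_empty] at hπsum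
  -- stationarity of π
  have hstat : ∀ z, ∑ x, π x * P x z = π z := by
    intro z
    calc ∑ x, π x * P x z = ∑ x, π z * P z x :=
          Finset.sum_congr rfl fun x _ => hrev x z
      _ = π z * ∑ x, P z x := by rw [Finset.mul_sum]
      _ = π z := by rw [hProw z, mul_one]
  set Φ : Ω → ℝ := fun a => ∑ z, π z * H z a with hΦ
  -- π-weighted sum of L(H·a) is 0, where L f x = f x - ∑ z, P x z * f z
  have hswap : ∀ f : Ω → ℝ, ∑ x, π x * ∑ z, P x z * f z = ∑ z, π z * f z := by
    intro f
    calc ∑ x, π x * ∑ z, P x z * f z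
        = ∑ x, ∑ z, π x * P x z * f z := by
          refine Finset.sum_congr rfl fun x _ => ?_
          rw [Finset.mul_sum]; exact Finset.sum_congr rfl fun z _ => by ring
      _ = ∑ z, ∑ x, π x * P x z * f z := Finset.sum_comm
      _ = ∑ z, (∑ x, π x * P x z) * f z := by
          refine Finset.sum_congr rfl fun z _ => (Finset.sum_mul _ _ _).symm
      _ = ∑ z, π z * f z := Finset.sum_congr rfl fun z _ => by rw [hstat z]
  have hLsum : ∀ a, ∑ x, π x * (H x a - ∑ z, P x z * H z a) = 0 := by
    intro a
    have : ∑ x, π x * (H x a - ∑ z, P x z * H z a)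
        = (∑ x, π x * H x a) - ∑ x, π x * ∑ z, P x z * H z a := by
      rw [← Finset.sum_sub_distrib]
      exact Finset.sum_congr rfl fun x _ => by ring
    rw [this, hswap (fun z => H z a)]
    ring
  -- Kac's formula: L(H·a) a = 1 - 1/π a
  have hLa : ∀ a, H a a - ∑ z, P a z * H z a = 1 - 1 / π a := by
    intro a
    have h0 := hLsum a
    rw [← Finset.add_sum_erase _ _ (Finset.mem_univ a)] at h0
    have herase : ∑ x ∈ Finset.univ.erase a, π x * (H x a - ∑ z, P x z * H z a)
        = ∑ x ∈ Finset.univ.erase a, π x := by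
      refine Finset.sum_congr rfl fun x hx => ?_
      have hxa : x ≠ a := Finset.ne_of_mem_erase hx
      rw [hHrec x a hxa]; ring
    have hπerase : ∑ x ∈ Finset.univ.erase a, π x = 1 - π a := by
      have := Finset.add_sum_erase _ π (Finset.mem_univ a)
      rw [hπsum] at this; linarith
    rw [herase, hπerase] at h0
    have hπa := (hπpos a).ne'
    field_simp
    nlinarith [hπpos a]
  -- L(H·a) x = 1 - δ_{x a}/π a
  have hLval : ∀ a x, H x a - ∑ z, P x z * H z a
      = 1 - (if x = a then 1 / π a else 0) := by
    intro a x
    by_cases hxa : x = a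
    · subst hxa; simp [hLa x]
    · rw [hHrec x a hxa]; simp [hxa]
  -- self-adjointness: ⟨u, P w⟩_π = ⟨P u, w⟩_π
  have hsym : ∀ u w : Ω → ℝ,
      ∑ x, π x * u x * ∑ z, P x z * w z = ∑ x, π x * w x * ∑ z, P x z * u z := by
    intro u w
    calc ∑ x, π x * u x * ∑ z, P x z * w z
        = ∑ x, ∑ z, π x * P x z * u x * w z := by
          refine Finset.sum_congr rfl fun x _ => ?_
          rw [Finset.mul_sum]; exact Finset.sum_congr rfl fun z _ => by ring
      _ = ∑ x, ∑ z, π z * P z x * u x * w z := by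
          refine Finset.sum_congr rfl fun x _ => Finset.sum_congr rfl fun z _ => ?_
          rw [hrev x z]
      _ = ∑ z, ∑ x, π z * P z x * u x * w z := Finset.sum_comm
      _ = ∑ z, π z * w z * ∑ x, P z x * u x := by
          refine Finset.sum_congr rfl fun z _ => ?_
          rw [Finset.mul_sum]; exact Finset.sum_congr rfl fun x _ => by ring
  -- key identity: Φ a - H b a = Φ b - H a b
  have key : ∀ a b, Φ a - H b a = Φ b - H a b := by
    intro a b
    have hadj : ∑ x, π x * H x a * (H x b - ∑ z, P x z * H z b)
        = ∑ x, π x * H x b * (H x a - ∑ z, P x z * H z a) := by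
      have := hsym (fun x => H x a) (fun x => H x b)
      have e1 : ∑ x, π x * H x a * (H x b - ∑ z, P x z * H z b)
          = (∑ x, π x * H x a * H x b) - ∑ x, π x * H x a * ∑ z, P x z * H z b := by
        rw [← Finset.sum_sub_distrib]
        exact Finset.sum_congr rfl fun x _ => by ring
      have e2 : ∑ x, π x * H x b * (H x a - ∑ z, P x z * H z a)
          = (∑ x, π x * H x b * H x a) - ∑ x, π x * H x b * ∑ z, P x z * H z a := by
        rw [← Finset.sum_sub_distrib]
        exact Finset.sum_congr rfl fun x _ => by ring
      rw [e1, e2, this]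
      congr 1
      exact Finset.sum_congr rfl fun x _ => by ring
    have eval : ∀ a b : Ω, ∑ x, π x * H x a * (H x b - ∑ z, P x z * H z b)
        = Φ a - H b a := by
      intro a b
      have : ∀ x, π x * H x a * (H x b - ∑ z, P x z * H z b)
          = π x * H x a - (if x = b then π x * H x a * (1 / π b) else 0) := by
        intro x
        rw [hLval b x]
        by_cases hxb : x = b <;> simp [hxb] <;> ring
      rw [Finset.sum_congr rfl fun x _ => this x, Finset.sum_sub_distrib,
        Finset.sum_ite_eq' Finset.univ b _]
      simp [hΦ]
      field_simp [(hπpos b).ne']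
    rw [eval a b, eval b a] at hadj
    linarith
  obtain ⟨w, -, hw⟩ := Finset.exists_max_image Finset.univ Φ ⟨Classical.arbitrary Ω, Finset.mem_univ _⟩
  refine ⟨w, fun x => ?_⟩
  have := key w x
  have hwx := hw x (Finset.mem_univ x)
  linarith
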